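/- (Lemma 1) Let ρ be a two-qubit density matrix and let T be the 3×3 real matrix with entries T_{ij} = tr(ρ (σ_i ⊗ σ_j)), i, j ∈ {1,2,3}. Then every singular value of T is at most 1; equivalently, for every k ∈ {1,2,3} the Ky Fan k norm satisfies ‖T‖_k ≤ k. Moreover, ‖T‖_tr = 3 if and only if ρ is a maximally entangled pure state, i.e. ρ is pure and both of its one-qubit reduced density matrices equal 𝕀₂/2. -/

import Mathlib

open Matrix BigOperators ComplexOrder Kronecker

noncomputable section

/-- The three standard Pauli matrices. -/
def pauli : Fin 3 → Matrix (Fin 2) (Fin 2) ℂ :=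
  ![!![0, 1; 1, 0], !![0, -Complex.I; Complex.I, 0], !![1, 0; 0, -1]]

/-- The singular values of a real matrix `M`: the square roots of the
eigenvalues of `MᵀM = MᴴM`. -/
def singVals {I J : Type*} [Fintype I] [Fintype J] [DecidableEq J]
    (M : Matrix I J ℝ) : J → ℝ :=
  fun j => Real.sqrt ((Matrix.posSemidef_conjTranspose_mul_self M).1.eigenvalues j)

/-- The Ky Fan `k` norm: the maximum, over sets of `k` of the singular values,
of their sum — equivalently, the sum of the `k` largest singular values. -/
def kyFanNorm {I J : Type*} [Fintype I] [Fintype J] [DecidableEq J]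
    (k : ℕ) (M : Matrix I J ℝ) : ℝ :=
  (Finset.univ : Finset (Finset J)).sup' ⟨∅, Finset.mem_univ ∅⟩
    fun s => if s.card = k then ∑ j ∈ s, singVals M j else 0

/-- The trace norm: the sum of all singular values. -/
def traceNorm {I J : Type*} [Fintype I] [Fintype J] [DecidableEq J]
    (M : Matrix I J ℝ) : ℝ :=
  ∑ j, singVals M j

/-! ### Auxiliary definitions and lemmas -/

/-- The four Pauli matrices including the identity. -/
def pauli4 : Fin 4 → Matrix (Fin 2) (Fin 2) ℂ := ![1, pauli 0, pauli 1, pauli 2]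

@[simp] lemma pauli4_zero : pauli4 0 = 1 := rfl
@[simp] lemma pauli4_one : pauli4 1 = pauli 0 := rfl
@[simp] lemma pauli4_two : pauli4 2 = pauli 1 := rfl
@[simp] lemma pauli4_three : pauli4 3 = pauli 2 := rfl

lemma parseval (ρ : Matrix (Fin 2 × Fin 2) (Fin 2 × Fin 2) ℂ) :
    ∑ μ : Fin 4, ∑ ν : Fin 4,
      (ρ * (pauli4 μ ⊗ₖ pauli4 ν)).trace * (ρ * (pauli4 μ ⊗ₖ pauli4 ν)).trace
      = 4 * (ρ * ρ).trace := by
  simp [Matrix.trace, Matrix.mul_apply, Fintype.sum_prod_type, Fin.sum_univ_succ,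
    pauli4, pauli, Matrix.kroneckerMap_apply, Matrix.diag, Matrix.one_apply]
  ring_nf
  simp only [Complex.I_sq]
  ring

lemma pauli_herm (i : Fin 3) : (pauli i).IsHermitian := by
  fin_cases i <;> (ext a b; fin_cases a <;> fin_cases b <;>
    simp [pauli, Matrix.IsHermitian, Matrix.conjTranspose_apply])

lemma pauli4_herm (μ : Fin 4) : (pauli4 μ).IsHermitian := by
  fin_cases μ
  · exact Matrix.isHermitian_one
  · exact pauli_herm 0
  · exact pauli_herm 1
  · exact pauli_herm 2

lemma kron_herm {A B : Matrix (Fin 2) (Fin 2) ℂ} (hA : A.IsHermitian) (hB : B.IsHermitian) :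
    (A ⊗ₖ B).IsHermitian := by
  ext ⟨a,b⟩ ⟨c,d⟩
  simp [Matrix.conjTranspose_apply, Matrix.kroneckerMap_apply]
  rw [← hA.apply, ← hB.apply]
  simp [Matrix.conjTranspose_apply]

lemma trace_real {n : Type*} [Fintype n] {ρ H : Matrix n n ℂ}
    (hρ : ρ.IsHermitian) (hH : H.IsHermitian) : ((ρ * H).trace).im = 0 := by
  have h : star ((ρ * H).trace) = (ρ * H).trace := by
    rw [← Matrix.trace_conjTranspose, Matrix.conjTranspose_mul, hρ.eq, hH.eq,
      Matrix.trace_mul_comm]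
  exact Complex.conj_eq_iff_im.mp h

lemma trace_eq_sum_eig {n : Type*} [Fintype n] [DecidableEq n] {𝕜 : Type*} [RCLike 𝕜]
    {A : Matrix n n 𝕜} (hA : A.IsHermitian) :
    A.trace = ∑ i, (hA.eigenvalues i : 𝕜) := by
  conv_lhs => rw [hA.spectral_theorem, Unitary.conjStarAlgAut_apply]
  rw [Matrix.trace_mul_cycle]
  rw [show (star (hA.eigenvectorUnitary : Matrix n n 𝕜)) * (hA.eigenvectorUnitary : Matrix n n 𝕜) = 1 from
    (Matrix.mem_unitaryGroup_iff').mp (hA.eigenvectorUnitary).2]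
  simp [Matrix.trace_diagonal]

lemma trace_sq_eq_sum_eig {n : Type*} [Fintype n] [DecidableEq n] {𝕜 : Type*} [RCLike 𝕜]
    {A : Matrix n n 𝕜} (hA : A.IsHermitian) :
    (A * A).trace = ∑ i, ((hA.eigenvalues i : 𝕜) ^ 2) := by
  have hU : (star (hA.eigenvectorUnitary : Matrix n n 𝕜)) * (hA.eigenvectorUnitary : Matrix n n 𝕜) = 1 :=
    (Matrix.mem_unitaryGroup_iff').mp (hA.eigenvectorUnitary).2
  conv_lhs => rw [hA.spectral_theorem, Unitary.conjStarAlgAut_apply]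
  rw [show ∀ U D sU : Matrix n n 𝕜, (U * D * sU) * (U * D * sU) = U * (D * (sU * U) * D) * sU from
    fun U D sU => by noncomm_ring, hU, mul_one, Matrix.trace_mul_cycle, ← mul_assoc, hU, one_mul,
    Matrix.diagonal_mul_diagonal]
  simp [Matrix.trace_diagonal, sq]

lemma psd_diag_nonneg {n : Type*} [Fintype n] [DecidableEq n] {M : Matrix n n ℂ}
    (hM : M.PosSemidef) (i : n) : 0 ≤ M i i := by
  have := hM.dotProduct_mulVec_nonneg (Pi.single i 1)
  simpa [dotProduct, Matrix.mulVec, Pi.single_apply, Finset.sum_ite_eq] using this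

lemma trace_mul_psd_nonneg {n : Type*} [Fintype n] [DecidableEq n] {ρ C : Matrix n n ℂ}
    (hρ : ρ.PosSemidef) (hC : C.PosSemidef) : 0 ≤ ((ρ * C).trace) := by
  obtain ⟨B, hB⟩ : ∃ B : Matrix n n ℂ, C = Bᴴ * B := by
    open scoped MatrixOrder in
    obtain ⟨X, hX, -, hXX⟩ :=
      sub_zero C ▸ CFC.exists_sqrt_of_isSelfAdjoint_of_quasispectrumRestricts hC.isHermitian
        (QuasispectrumRestricts.nnreal_of_nonneg hC.nonneg)
    exact ⟨X, by rw [sub_zero] at hXX; rw [← hXX, ← Matrix.star_eq_conjTranspose, hX.star_eq]⟩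
  rw [hB, ← Matrix.mul_assoc, Matrix.trace_mul_cycle]
  have : (B * ρ * Bᴴ).PosSemidef := hρ.mul_mul_conjTranspose_same B
  rw [Matrix.trace]
  exact Finset.sum_nonneg fun i _ => by simpa [Matrix.diag] using psd_diag_nonneg this i

def Xc (x : Fin 3 → ℝ) : Matrix (Fin 2) (Fin 2) ℂ := ∑ i, (x i : ℂ) • pauli i

lemma Xc_eq (x : Fin 3 → ℝ) : Xc x =
    !![(x 2 : ℂ), x 0 - x 1 * Complex.I; x 0 + x 1 * Complex.I, -(x 2 : ℂ)] := by
  ext a b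
  fin_cases a <;> fin_cases b <;>
    simp [Xc, pauli, Fin.sum_univ_succ] <;> ring

lemma Xc_herm (x : Fin 3 → ℝ) : (Xc x).IsHermitian := by
  rw [Xc_eq]
  ext a b
  fin_cases a <;> fin_cases b <;>
    simp [Matrix.conjTranspose_apply, Complex.ext_iff]

lemma Xc_sq (x : Fin 3 → ℝ) (hx : ∑ i, x i ^ 2 = 1) : Xc x * Xc x = 1 := by
  rw [Xc_eq]
  have hr : (x 0)^2 + (x 1)^2 + (x 2)^2 = (1:ℝ) := by
    have := hx; simp [Fin.sum_univ_succ] at this; linarith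
  have h : ((x 0 : ℂ))^2 + (x 1 : ℂ)^2 + (x 2 : ℂ)^2 = 1 := by
    exact_mod_cast congrArg (fun r : ℝ => (r : ℂ)) hr
  ext a b
  fin_cases a <;> fin_cases b <;>
    simp [Matrix.mul_apply, Fin.sum_univ_succ, Matrix.one_apply] <;>
    ring_nf <;> simp [Complex.I_sq] <;> linear_combination h

lemma kron_expand (x y : Fin 3 → ℝ) :
    (Xc x) ⊗ₖ (Xc y) = ∑ i, ∑ j, ((x i * y j : ℝ) : ℂ) • (pauli i ⊗ₖ pauli j) := by
  ext ⟨a, b⟩ ⟨c, d⟩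
  simp only [Xc, Matrix.kroneckerMap_apply, Matrix.sum_apply, Matrix.smul_apply,
    Finset.sum_mul, Finset.mul_sum, smul_eq_mul]
  rw [Finset.sum_comm]
  apply Finset.sum_congr rfl; intro i _
  apply Finset.sum_congr rfl; intro j _
  push_cast
  ring

lemma proj_psd {n : Type*} [Fintype n] [DecidableEq n] {B : Matrix n n ℂ}
    (hB : B.IsHermitian) (hB2 : B * B = B) : B.PosSemidef := by
  have h : B = Bᴴ * B := by
    calc B = B * B := hB2.symm
    _ = Bᴴ * B := by rw [hB.eq]
  exact h ▸ Matrix.posSemidef_conjTranspose_mul_self B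

lemma unit_bound {ρ : Matrix (Fin 2 × Fin 2) (Fin 2 × Fin 2) ℂ} (hρ : ρ.PosSemidef)
    (htr : ρ.trace = 1) (x y : Fin 3 → ℝ) (hx : ∑ i, x i ^ 2 = 1) (hy : ∑ i, y i ^ 2 = 1) :
    |((ρ * ((Xc x) ⊗ₖ (Xc y))).trace).re| ≤ 1 := by
  set M := (Xc x) ⊗ₖ (Xc y) with hM
  have hMh : M.IsHermitian := kron_herm (Xc_herm x) (Xc_herm y)
  have hM2 : M * M = 1 := by
    rw [hM, ← Matrix.mul_kronecker_mul, Xc_sq x hx, Xc_sq y hy, Matrix.one_kronecker_one]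
  have key : ∀ N : Matrix (Fin 2 × Fin 2) (Fin 2 × Fin 2) ℂ, N.IsHermitian →
      N * N = 1 → 0 ≤ ((ρ * (1 + N)).trace).re := by
    intro N hNh hN2
    have hBh : ((2⁻¹ : ℂ) • (1 + N)).IsHermitian := by
      unfold Matrix.IsHermitian
      rw [Matrix.conjTranspose_smul, Matrix.conjTranspose_add, Matrix.conjTranspose_one, hNh.eq]
      norm_num
    have hBB : ((2⁻¹ : ℂ) • (1 + N)) * ((2⁻¹ : ℂ) • (1 + N)) = (2⁻¹ : ℂ) • (1 + N) := by
      have h1 : (1 + N) * (1 + N) = (2 : ℂ) • (1 + N) := by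
        rw [add_mul, mul_add, mul_add, hN2, one_mul, mul_one, one_mul, two_smul]
        abel
      rw [Matrix.smul_mul, Matrix.mul_smul, h1, smul_smul, smul_smul]
      norm_num
    have hpsd := proj_psd hBh hBB
    have h0 := trace_mul_psd_nonneg hρ hpsd
    rw [Matrix.mul_smul, Matrix.trace_smul] at h0
    have := (Complex.le_def.mp h0).1
    simp [Complex.smul_re] at this
    linarith
  have h1 := key M hMh hM2
  have h2 := key (-M) (by unfold Matrix.IsHermitian; rw [Matrix.conjTranspose_neg, hMh.eq])
    (by rw [neg_mul_neg, hM2])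
  rw [Matrix.mul_add, Matrix.trace_add, Matrix.mul_one, htr] at h1 h2
  simp only [Matrix.mul_neg, Matrix.trace_neg, Complex.add_re, Complex.one_re,
    Complex.neg_re] at h1 h2
  rw [abs_le]; constructor <;> linarith

lemma trace_expand (ρ : Matrix (Fin 2 × Fin 2) (Fin 2 × Fin 2) ℂ) (x y : Fin 3 → ℝ) :
    ((ρ * ((Xc x) ⊗ₖ (Xc y))).trace).re
      = ∑ i, ∑ j, x i * y j * ((ρ * (pauli i ⊗ₖ pauli j)).trace).re := by
  rw [kron_expand]
  simp only [Finset.mul_sum, Matrix.mul_sum, Matrix.mul_smul, Matrix.trace_sum,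
    Matrix.trace_smul, Complex.re_sum]
  congr 1; ext i; congr 1; ext j
  simp [Complex.smul_re]

lemma gen_bound {ρ : Matrix (Fin 2 × Fin 2) (Fin 2 × Fin 2) ℂ} (hρ : ρ.PosSemidef)
    (htr : ρ.trace = 1) (x y : Fin 3 → ℝ) :
    |∑ i, ∑ j, x i * y j * ((ρ * (pauli i ⊗ₖ pauli j)).trace).re|
      ≤ Real.sqrt (∑ i, x i ^ 2) * Real.sqrt (∑ j, y j ^ 2) := by
  set a := Real.sqrt (∑ i, x i ^ 2) with ha
  set b := Real.sqrt (∑ j, y j ^ 2) with hb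
  have hxnn : (0:ℝ) ≤ ∑ i, x i ^ 2 := Finset.sum_nonneg fun i _ => sq_nonneg _
  have hynn : (0:ℝ) ≤ ∑ i, y i ^ 2 := Finset.sum_nonneg fun i _ => sq_nonneg _
  have ha2 : a ^ 2 = ∑ i, x i ^ 2 := Real.sq_sqrt hxnn
  have hb2 : b ^ 2 = ∑ i, y i ^ 2 := Real.sq_sqrt hynn
  rcases eq_or_ne a 0 with h0 | hA
  · have hx0 : ∀ i, x i = 0 := by
      intro i
      have : ∑ i, x i ^ 2 = 0 := by rw [← ha2, h0]; ring
      have := (Finset.sum_eq_zero_iff_of_nonneg (fun i _ => sq_nonneg (x i))).mp this i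
        (Finset.mem_univ i)
      exact pow_eq_zero_iff (n := 2) (by norm_num) |>.mp this
    simp [hx0, h0]
  rcases eq_or_ne b 0 with h0 | hB
  · have hy0 : ∀ i, y i = 0 := by
      intro i
      have : ∑ i, y i ^ 2 = 0 := by rw [← hb2, h0]; ring
      have := (Finset.sum_eq_zero_iff_of_nonneg (fun i _ => sq_nonneg (y i))).mp this i
        (Finset.mem_univ i)
      exact pow_eq_zero_iff (n := 2) (by norm_num) |>.mp this
    simp [hy0, h0]
  have hapos : 0 < a := lt_of_le_of_ne (Real.sqrt_nonneg _) (Ne.symm hA)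
  have hbpos : 0 < b := lt_of_le_of_ne (Real.sqrt_nonneg _) (Ne.symm hB)
  have hx1 : ∑ i, (x i / a) ^ 2 = 1 := by
    simp only [div_pow, ← Finset.sum_div, ← ha2]
    field_simp
  have hy1 : ∑ i, (y i / b) ^ 2 = 1 := by
    simp only [div_pow, ← Finset.sum_div, ← hb2]
    field_simp
  have hub := unit_bound hρ htr (fun i => x i / a) (fun i => y i / b) hx1 hy1
  rw [trace_expand] at hub
  have hsum : ∑ i, ∑ j, x i * y j * ((ρ * (pauli i ⊗ₖ pauli j)).trace).re
      = a * b * ∑ i, ∑ j, (x i / a) * (y j / b) * ((ρ * (pauli i ⊗ₖ pauli j)).trace).re := by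
    simp only [Finset.mul_sum]
    apply Finset.sum_congr rfl; intro i _
    apply Finset.sum_congr rfl; intro j _
    field_simp
  rw [hsum, abs_mul, abs_of_pos (by positivity : (0:ℝ) < a * b)]
  calc a * b * |∑ i, ∑ j, (x i / a) * (y j / b) * ((ρ * (pauli i ⊗ₖ pauli j)).trace).re|
      ≤ a * b * 1 := by
        apply mul_le_mul_of_nonneg_left hub (by positivity)
    _ = a * b := by ring

lemma eig_le_one {T : Matrix (Fin 3) (Fin 3) ℝ}
    (hbound : ∀ x y : Fin 3 → ℝ, |∑ i, ∑ j, x i * y j * T i j|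
      ≤ Real.sqrt (∑ i, x i ^ 2) * Real.sqrt (∑ j, y j ^ 2)) (j : Fin 3) :
    (Matrix.posSemidef_conjTranspose_mul_self T).1.eigenvalues j ≤ 1 := by
  set hA := (Matrix.posSemidef_conjTranspose_mul_self T).1 with hhA
  set E := hA.eigenvalues j with hE
  set v : Fin 3 → ℝ := ⇑(hA.eigenvectorBasis j) with hv
  have heig : (Tᴴ * T) *ᵥ v = E • v := hA.mulVec_eigenvectorBasis j
  have hvnorm : ∑ i, v i ^ 2 = 1 := by
    have h1 : ‖hA.eigenvectorBasis j‖ = 1 := hA.eigenvectorBasis.orthonormal.1 j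
    have h2 : (inner ℝ (hA.eigenvectorBasis j) (hA.eigenvectorBasis j) : ℝ) = 1 := by
      rw [real_inner_self_eq_norm_sq, h1]; norm_num
    rw [PiLp.inner_apply] at h2
    simpa [sq, hv] using h2
  set S := ∑ i, (T *ᵥ v) i ^ 2 with hS
  have hSnn : 0 ≤ S := Finset.sum_nonneg fun i _ => sq_nonneg _
  have hES : E = S := by
    have h1 : v ⬝ᵥ ((Tᴴ * T) *ᵥ v) = E := by
      rw [heig, dotProduct_smul, smul_eq_mul]
      have : v ⬝ᵥ v = 1 := by simpa [dotProduct, sq] using hvnorm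
      rw [this, mul_one]
    have h2 : v ⬝ᵥ ((Tᴴ * T) *ᵥ v) = S := by
      rw [← Matrix.mulVec_mulVec, dotProduct_mulVec v,
        show Tᴴ = Tᵀ from rfl, Matrix.vecMul_transpose]
      simp only [hS, dotProduct, sq]
    rw [← h1, h2]
  have hb := hbound (T *ᵥ v) v
  have hL : ∑ i, ∑ k, (T *ᵥ v) i * v k * T i k = S := by
    apply Finset.sum_congr rfl; intro i _
    rw [show (T *ᵥ v) i ^ 2 = (T *ᵥ v) i * (T *ᵥ v) i from sq ((T *ᵥ v) i)]
    rw [show (T *ᵥ v) i = ∑ k, T i k * v k from rfl, Finset.mul_sum]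
    apply Finset.sum_congr rfl; intro k _; ring
  rw [hL, abs_of_nonneg hSnn] at hb
  have hsq : Real.sqrt S * Real.sqrt S = S := Real.mul_self_sqrt hSnn
  have hS' : Real.sqrt (∑ i, (T *ᵥ v) i ^ 2) = Real.sqrt S := rfl
  rw [hS', hvnorm, Real.sqrt_one, mul_one] at hb
  nlinarith [Real.sqrt_nonneg S]

lemma frob_trace (T : Matrix (Fin 3) (Fin 3) ℝ) :
    (Tᴴ * T).trace = ∑ i, ∑ j, T i j ^ 2 := by
  rw [Finset.sum_comm]
  simp [Matrix.trace, Matrix.mul_apply, Matrix.diag, Matrix.conjTranspose_apply, sq]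

lemma red_trace1 (ρ : Matrix (Fin 2 × Fin 2) (Fin 2 × Fin 2) ℂ) (i : Fin 3) :
    (ρ * (pauli i ⊗ₖ (1 : Matrix (Fin 2) (Fin 2) ℂ))).trace
      = ((Matrix.of fun a b : Fin 2 => ∑ c, ρ (a, c) (b, c)) * pauli i).trace := by
  fin_cases i <;>
    simp [Matrix.trace, Matrix.mul_apply, Fintype.sum_prod_type, Fin.sum_univ_succ, pauli,
      Matrix.kroneckerMap_apply, Matrix.one_apply, Matrix.diag] <;> ring

lemma red_trace2 (ρ : Matrix (Fin 2 × Fin 2) (Fin 2 × Fin 2) ℂ) (i : Fin 3) :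
    (ρ * ((1 : Matrix (Fin 2) (Fin 2) ℂ) ⊗ₖ pauli i)).trace
      = ((Matrix.of fun a b : Fin 2 => ∑ c, ρ (c, a) (c, b)) * pauli i).trace := by
  fin_cases i <;>
    simp [Matrix.trace, Matrix.mul_apply, Fintype.sum_prod_type, Fin.sum_univ_succ, pauli,
      Matrix.kroneckerMap_apply, Matrix.one_apply, Matrix.diag] <;> ring

lemma red_herm1 {ρ : Matrix (Fin 2 × Fin 2) (Fin 2 × Fin 2) ℂ} (hρ : ρ.IsHermitian) :
    (Matrix.of fun a b : Fin 2 => ∑ c, ρ (a, c) (b, c)).IsHermitian := by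
  ext a b
  simp only [Matrix.conjTranspose_apply, Matrix.of_apply, star_sum]
  exact Finset.sum_congr rfl fun c _ => by rw [← hρ.apply (a, c) (b, c)]

lemma red_herm2 {ρ : Matrix (Fin 2 × Fin 2) (Fin 2 × Fin 2) ℂ} (hρ : ρ.IsHermitian) :
    (Matrix.of fun a b : Fin 2 => ∑ c, ρ (c, a) (c, b)).IsHermitian := by
  ext a b
  simp only [Matrix.conjTranspose_apply, Matrix.of_apply, star_sum]
  exact Finset.sum_congr rfl fun c _ => by rw [← hρ.apply (c, a) (c, b)]

lemma red_tr1 (ρ : Matrix (Fin 2 × Fin 2) (Fin 2 × Fin 2) ℂ) :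
    (Matrix.of fun a b : Fin 2 => ∑ c, ρ (a, c) (b, c)).trace = ρ.trace := by
  simp [Matrix.trace, Matrix.diag, Fintype.sum_prod_type]

lemma red_tr2 (ρ : Matrix (Fin 2 × Fin 2) (Fin 2 × Fin 2) ℂ) :
    (Matrix.of fun a b : Fin 2 => ∑ c, ρ (c, a) (c, b)).trace = ρ.trace := by
  rw [Matrix.trace, Matrix.trace, Fintype.sum_prod_type]
  simp only [Matrix.diag, Matrix.of_apply]
  rw [Finset.sum_comm]

lemma herm2_char {M : Matrix (Fin 2) (Fin 2) ℂ} (hM : M.IsHermitian) (htr : M.trace = 1)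
    (h : ∀ i : Fin 3, ((M * pauli i).trace).re = 0) : M = (2⁻¹ : ℂ) • 1 := by
  have h01 : M 1 0 = (starRingEnd ℂ) (M 0 1) := by
    have := (hM.apply 1 0).symm; simpa [Complex.star_def] using this
  have d0 : (M 0 0).im = 0 := by
    have := hM.apply 0 0
    simp only [Complex.star_def] at this
    exact Complex.conj_eq_iff_im.mp this
  have d1 : (M 1 1).im = 0 := by
    have := hM.apply 1 1
    simp only [Complex.star_def] at this
    exact Complex.conj_eq_iff_im.mp this
  have h0 := h 0; have h1 := h 1; have h2 := h 2
  simp [Matrix.trace, Matrix.mul_apply, Fin.sum_univ_succ, pauli, Matrix.diag, h01,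
    Complex.add_re, Complex.mul_re, Complex.mul_im] at h0 h1 h2
  have htr' : (M 0 0).re + (M 1 1).re = 1 := by
    have := congrArg Complex.re htr
    simpa [Matrix.trace, Fin.sum_univ_succ, Matrix.diag] using this
  ext a b
  fin_cases a <;> fin_cases b <;> apply Complex.ext <;>
    simp [Matrix.one_apply, h01, Complex.conj_re, Complex.conj_im] <;> linarith

lemma half_id_trace (i : Fin 3) :
    ((((2⁻¹ : ℂ) • (1 : Matrix (Fin 2) (Fin 2) ℂ)) * pauli i).trace).re = 0 := by
  fin_cases i <;>
    simp [Matrix.trace, Matrix.mul_apply, Fin.sum_univ_succ, pauli, Matrix.diag, Matrix.one_apply]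

lemma purity_le_one {n : Type*} [Fintype n] [DecidableEq n]
    {ρ : Matrix n n ℂ} (hρ : ρ.PosSemidef) (htr : ρ.trace = 1) :
    ((ρ * ρ).trace).re ≤ 1 := by
  have h1 : ∑ i, hρ.1.eigenvalues i = 1 := by
    have h := trace_eq_sum_eig hρ.1
    rw [htr] at h
    have := congrArg Complex.re h.symm
    simpa [Complex.re_sum] using this
  have h2 : ((ρ * ρ).trace).re = ∑ i, (hρ.1.eigenvalues i) ^ 2 := by
    have h := trace_sq_eq_sum_eig hρ.1
    have := congrArg Complex.re h
    simpa [Complex.re_sum, ← Complex.ofReal_pow] using this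
  rw [h2, ← h1]
  apply Finset.sum_le_sum
  intro i _
  have hnn := hρ.eigenvalues_nonneg i
  have hle : hρ.1.eigenvalues i ≤ 1 := by
    rw [← h1]
    exact Finset.single_le_sum (fun j _ => hρ.eigenvalues_nonneg j) (Finset.mem_univ i)
  nlinarith

/-- The key Parseval-type identity, with real parts. -/
lemma key_identity {ρ : Matrix (Fin 2 × Fin 2) (Fin 2 × Fin 2) ℂ}
    (hρh : ρ.IsHermitian) (htr : ρ.trace = 1) :
    1 + (∑ i, ((ρ * (pauli i ⊗ₖ (1 : Matrix (Fin 2) (Fin 2) ℂ))).trace.re) ^ 2)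
      + (∑ j, ((ρ * ((1 : Matrix (Fin 2) (Fin 2) ℂ) ⊗ₖ pauli j)).trace.re) ^ 2)
      + (∑ i, ∑ j, ((ρ * (pauli i ⊗ₖ pauli j)).trace.re) ^ 2)
      = 4 * ((ρ * ρ).trace).re := by
  have par := congrArg Complex.re (parseval ρ)
  have him : ∀ μ ν : Fin 4, ((ρ * (pauli4 μ ⊗ₖ pauli4 ν)).trace).im = 0 := fun μ ν =>
    trace_real hρh (kron_herm (pauli4_herm μ) (pauli4_herm ν))
  have hre : ∀ μ ν : Fin 4,
      ((ρ * (pauli4 μ ⊗ₖ pauli4 ν)).trace * (ρ * (pauli4 μ ⊗ₖ pauli4 ν)).trace).re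
        = ((ρ * (pauli4 μ ⊗ₖ pauli4 ν)).trace.re) ^ 2 := by
    intro μ ν
    rw [Complex.mul_re, him, sq]
    ring
  rw [Complex.re_sum] at par
  simp only [Complex.re_sum] at par
  simp only [hre] at par
  rw [Fin.sum_univ_four] at par
  simp only [Fin.sum_univ_four] at par
  simp only [pauli4_zero, pauli4_one, pauli4_two, pauli4_three] at par
  rw [Matrix.one_kronecker_one, Matrix.mul_one, htr] at par
  norm_num at par
  simp only [Fin.sum_univ_three]
  linarith [par]

/-- Lemma 1: For a two-qubit density matrix `ρ` with correlation
matrix `T_{ij} = tr(ρ (σ_i ⊗ σ_j))`, every singular value of `T` is at most 1;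
equivalently `‖T‖_k ≤ k` for every `k ∈ {1,2,3}`.  Moreover `‖T‖_tr = 3` iff
`ρ` is a maximally entangled pure state, i.e. `ρ` is pure and both one-qubit
reduced density matrices equal `𝕀₂/2`. -/
theorem two_qubit_correlation_matrix_kyFan_bound
    (ρ : Matrix (Fin 2 × Fin 2) (Fin 2 × Fin 2) ℂ)
    (hρ : ρ.PosSemidef) (hρtr : ρ.trace = 1) :
    (∀ j, singVals (Matrix.of fun i j : Fin 3 =>
        ((ρ * (pauli i ⊗ₖ pauli j)).trace.re)) j ≤ 1) ∧
    (∀ k : ℕ, 1 ≤ k → k ≤ 3 →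
      kyFanNorm k (Matrix.of fun i j : Fin 3 =>
        ((ρ * (pauli i ⊗ₖ pauli j)).trace.re)) ≤ k) ∧
    (traceNorm (Matrix.of fun i j : Fin 3 =>
        ((ρ * (pauli i ⊗ₖ pauli j)).trace.re)) = 3 ↔
      ((ρ * ρ).trace = 1 ∧
        (Matrix.of fun a b : Fin 2 => ∑ c, ρ (a, c) (b, c)) =
          (2 : ℂ)⁻¹ • (1 : Matrix (Fin 2) (Fin 2) ℂ) ∧
        (Matrix.of fun a b : Fin 2 => ∑ c, ρ (c, a) (c, b)) =
          (2 : ℂ)⁻¹ • (1 : Matrix (Fin 2) (Fin 2) ℂ))) := by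
  set T : Matrix (Fin 3) (Fin 3) ℝ := Matrix.of fun i j : Fin 3 =>
    ((ρ * (pauli i ⊗ₖ pauli j)).trace.re) with hT
  have hbound : ∀ x y : Fin 3 → ℝ, |∑ i, ∑ j, x i * y j * T i j|
      ≤ Real.sqrt (∑ i, x i ^ 2) * Real.sqrt (∑ j, y j ^ 2) := by
    intro x y
    have := gen_bound hρ hρtr x y
    simpa only [hT, Matrix.of_apply] using this
  have hE1 : ∀ j, (Matrix.posSemidef_conjTranspose_mul_self T).1.eigenvalues j ≤ 1 :=
    eig_le_one hbound
  have hE0 : ∀ j, 0 ≤ (Matrix.posSemidef_conjTranspose_mul_self T).1.eigenvalues j :=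
    (Matrix.posSemidef_conjTranspose_mul_self T).eigenvalues_nonneg
  have part1 : ∀ j, singVals T j ≤ 1 := by
    intro j
    simp only [singVals]
    calc Real.sqrt ((Matrix.posSemidef_conjTranspose_mul_self T).1.eigenvalues j)
        ≤ Real.sqrt 1 := Real.sqrt_le_sqrt (hE1 j)
      _ = 1 := Real.sqrt_one
  have sing0 : ∀ j, 0 ≤ singVals T j := fun j => Real.sqrt_nonneg _
  refine ⟨part1, ?_, ?_⟩
  · -- Ky Fan norms
    intro k hk1 hk3
    apply Finset.sup'_le
    intro s _
    by_cases hs : s.card = k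
    · rw [if_pos hs]
      calc ∑ j ∈ s, singVals T j ≤ ∑ j ∈ s, 1 := Finset.sum_le_sum fun j _ => part1 j
        _ = (s.card : ℝ) := by simp
        _ = (k : ℝ) := by rw [hs]
    · rw [if_neg hs]
      positivity
  · -- trace norm = 3 iff maximally entangled
    have hEsum : ∑ j, (Matrix.posSemidef_conjTranspose_mul_self T).1.eigenvalues j
        = ∑ i, ∑ j, T i j ^ 2 := by
      have h := trace_eq_sum_eig (Matrix.posSemidef_conjTranspose_mul_self T).1
      rw [frob_trace] at h
      simpa using h.symm
    have key := key_identity hρ.1 hρtr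
    have hP := purity_le_one hρ hρtr
    have hPim : ((ρ * ρ).trace).im = 0 := trace_real hρ.1 hρ.1
    have hTsq : ∑ i, ∑ j, T i j ^ 2
        = ∑ i, ∑ j, ((ρ * (pauli i ⊗ₖ pauli j)).trace.re) ^ 2 := rfl
    constructor
    · -- forward
      intro h3
      have hsv1 : ∀ j, singVals T j = 1 := by
        have hle : ∀ j ∈ (Finset.univ : Finset (Fin 3)), singVals T j ≤ (1:ℝ) :=
          fun j _ => part1 j
        have hsum : ∑ j, singVals T j = ∑ j : Fin 3, (1:ℝ) := by
          rw [show ∑ j : Fin 3, (1:ℝ) = 3 by simp]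
          exact h3
        intro j
        exact (Finset.sum_eq_sum_iff_of_le hle).mp hsum j (Finset.mem_univ j)
      have hEone : ∀ j, (Matrix.posSemidef_conjTranspose_mul_self T).1.eigenvalues j = 1 := by
        intro j
        have := hsv1 j
        simp only [singVals] at this
        nlinarith [Real.sq_sqrt (hE0 j), this]
      have hF3 : ∑ i, ∑ j, T i j ^ 2 = 3 := by
        rw [← hEsum]
        rw [Finset.sum_congr rfl fun j _ => hEone j]; simp
      rw [hTsq] at hF3
      rw [hF3] at key
      -- 1 + A + B + 3 = 4P ≤ 4
      set A := ∑ i, ((ρ * (pauli i ⊗ₖ (1 : Matrix (Fin 2) (Fin 2) ℂ))).trace.re) ^ 2 with hA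
      set B := ∑ j, ((ρ * ((1 : Matrix (Fin 2) (Fin 2) ℂ) ⊗ₖ pauli j)).trace.re) ^ 2 with hB
      have hAnn : 0 ≤ A := Finset.sum_nonneg fun i _ => sq_nonneg _
      have hBnn : 0 ≤ B := Finset.sum_nonneg fun i _ => sq_nonneg _
      have hA0 : A = 0 := by linarith
      have hB0 : B = 0 := by linarith
      have hP1 : ((ρ * ρ).trace).re = 1 := by linarith
      have ha0 : ∀ i, ((ρ * (pauli i ⊗ₖ (1 : Matrix (Fin 2) (Fin 2) ℂ))).trace.re) = 0 := by
        intro i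
        have := (Finset.sum_eq_zero_iff_of_nonneg (fun i _ => sq_nonneg
          ((ρ * (pauli i ⊗ₖ (1 : Matrix (Fin 2) (Fin 2) ℂ))).trace.re))).mp hA0 i
          (Finset.mem_univ i)
        exact pow_eq_zero_iff (n := 2) (by norm_num) |>.mp this
      have hb0 : ∀ j, ((ρ * ((1 : Matrix (Fin 2) (Fin 2) ℂ) ⊗ₖ pauli j)).trace.re) = 0 := by
        intro j
        have := (Finset.sum_eq_zero_iff_of_nonneg (fun j _ => sq_nonneg
          ((ρ * ((1 : Matrix (Fin 2) (Fin 2) ℂ) ⊗ₖ pauli j)).trace.re))).mp hB0 j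
          (Finset.mem_univ j)
        exact pow_eq_zero_iff (n := 2) (by norm_num) |>.mp this
      refine ⟨Complex.ext (by simpa using hP1) (by simpa using hPim), ?_, ?_⟩
      · apply herm2_char (red_herm1 hρ.1) (by rw [red_tr1]; exact hρtr)
        intro i
        rw [← red_trace1]
        exact ha0 i
      · apply herm2_char (red_herm2 hρ.1) (by rw [red_tr2]; exact hρtr)
        intro j
        rw [← red_trace2]
        exact hb0 j
    · -- backward
      rintro ⟨hpur, hr1, hr2⟩
      have hP1 : ((ρ * ρ).trace).re = 1 := by rw [hpur]; simp
      have ha0 : ∀ i, ((ρ * (pauli i ⊗ₖ (1 : Matrix (Fin 2) (Fin 2) ℂ))).trace.re) = 0 := by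
        intro i
        rw [red_trace1, hr1]
        exact half_id_trace i
      have hb0 : ∀ j, ((ρ * ((1 : Matrix (Fin 2) (Fin 2) ℂ) ⊗ₖ pauli j)).trace.re) = 0 := by
        intro j
        rw [red_trace2, hr2]
        exact half_id_trace j
      simp only [ha0, hb0] at key
      have hF3 : ∑ i, ∑ j, T i j ^ 2 = 3 := by
        rw [hTsq]
        simp at key
        linarith
      have hEsum3 : ∑ j, (Matrix.posSemidef_conjTranspose_mul_self T).1.eigenvalues j = 3 := by
        rw [hEsum, hF3]
      have hlow : ∀ j, (Matrix.posSemidef_conjTranspose_mul_self T).1.eigenvalues j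
          ≤ singVals T j := by
        intro j
        simp only [singVals]
        set e := (Matrix.posSemidef_conjTranspose_mul_self T).1.eigenvalues j with he
        have h1 : Real.sqrt e * Real.sqrt e = e := Real.mul_self_sqrt (hE0 j)
        have h2 : Real.sqrt e ≤ 1 := by
          calc Real.sqrt e ≤ Real.sqrt 1 := Real.sqrt_le_sqrt (hE1 j)
            _ = 1 := Real.sqrt_one
        nlinarith [Real.sqrt_nonneg e]
      have hup : traceNorm T ≤ 3 := by
        rw [traceNorm]
        calc ∑ j, singVals T j ≤ ∑ j : Fin 3, (1:ℝ) := Finset.sum_le_sum fun j _ => part1 j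
          _ = 3 := by simp
      have hdown : (3:ℝ) ≤ traceNorm T := by
        rw [traceNorm, ← hEsum3]
        exact Finset.sum_le_sum fun j _ => hlow j
      linarith
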